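/- Let θ₀ and θ₁ be commuting involutions of a compact semisimple Lie algebra g, a a maximal abelian subspace of p₀ ∩ p₁, and aᵢ a maximal abelian subspace of pᵢ containing a for i = 0,1. Then a₀ + a₁ is an abelian subspace of g, i.e., [a₀, a₁] = {0}. -/

import Mathlib

/-- Let `θ₀` and `θ₁` be commuting involutions of a compact semisimple
Lie algebra `g` (with a fixed `Ad`-invariant inner product `B`), `a` a maximal abelian
subspace of `p₀ ∩ p₁`, and `aᵢ` a maximal abelian subspace of `pᵢ` containing `a` for
`i = 0, 1`.  Then `a₀ + a₁` is an abelian subspace of `g`, i.e. `[a₀, a₁] = {0}`. -/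
theorem stmt12
    (g : Type*) [LieRing g] [LieAlgebra ℝ g] [Module.Finite ℝ g]
    [LieAlgebra.IsSemisimple ℝ g]
    (B : g →ₗ[ℝ] g →ₗ[ℝ] ℝ)
    (hsymm : ∀ X Y : g, B X Y = B Y X)
    (hposdef : ∀ X : g, X ≠ 0 → 0 < B X X)
    (hinv : ∀ Z X Y : g, B ⁅Z, X⁆ Y = -B X ⁅Z, Y⁆)
    (θ₀ θ₁ : g →ₗ⁅ℝ⁆ g)
    (hθ₀ : ∀ X : g, θ₀ (θ₀ X) = X) (hθ₁ : ∀ X : g, θ₁ (θ₁ X) = X)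
    (hcomm : ∀ X : g, θ₀ (θ₁ X) = θ₁ (θ₀ X))
    (a : Submodule ℝ g)
    (hap : ∀ v ∈ a, θ₀ v = -v ∧ θ₁ v = -v)
    (habelian : ∀ u ∈ a, ∀ v ∈ a, ⁅u, v⁆ = 0)
    (hamax : ∀ v : g, θ₀ v = -v → θ₁ v = -v → (∀ u ∈ a, ⁅u, v⁆ = 0) → v ∈ a)
    (a₀ a₁ : Submodule ℝ g) (haa₀ : a ≤ a₀) (haa₁ : a ≤ a₁)
    (ha₀p : ∀ v ∈ a₀, θ₀ v = -v) (ha₁p : ∀ v ∈ a₁, θ₁ v = -v)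
    (ha₀abelian : ∀ u ∈ a₀, ∀ v ∈ a₀, ⁅u, v⁆ = 0)
    (ha₁abelian : ∀ u ∈ a₁, ∀ v ∈ a₁, ⁅u, v⁆ = 0)
    (ha₀max : ∀ v : g, θ₀ v = -v → (∀ u ∈ a₀, ⁅u, v⁆ = 0) → v ∈ a₀)
    (ha₁max : ∀ v : g, θ₁ v = -v → (∀ u ∈ a₁, ⁅u, v⁆ = 0) → v ∈ a₁) :
    ∀ X ∈ a₀, ∀ Y ∈ a₁, ⁅X, Y⁆ = 0 := by
  intro X hX Y hY
  have hθ₀X : θ₀ X = -X := ha₀p X hX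
  have hθ₁Y : θ₁ Y = -Y := ha₁p Y hY
  have hθ₀θ₁X : θ₀ (θ₁ X) = -θ₁ X := by rw [hcomm, hθ₀X, map_neg]
  have hθ₁θ₀Y : θ₁ (θ₀ Y) = -θ₀ Y := by rw [← hcomm, hθ₁Y, map_neg]
  -- X - θ₁ X ∈ a
  have hXm : X - θ₁ X ∈ a := by
    apply hamax
    · rw [map_sub, hθ₀X, hθ₀θ₁X]; abel
    · rw [map_sub, hθ₁]; abel
    · intro u hu
      have h1 : ⁅u, X⁆ = 0 := ha₀abelian u (haa₀ hu) X hX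
      have h2 : ⁅u, θ₁ X⁆ = 0 := by
        have h3 := congrArg θ₁ h1
        rw [LieHom.map_lie, (hap u hu).2, map_zero, neg_lie] at h3
        exact neg_eq_zero.mp h3
      rw [lie_sub, h1, h2, sub_zero]
  -- Y - θ₀ Y ∈ a
  have hYm : Y - θ₀ Y ∈ a := by
    apply hamax
    · rw [map_sub, hθ₀]; abel
    · rw [map_sub, hθ₁Y, hθ₁θ₀Y]; abel
    · intro u hu
      have h1 : ⁅u, Y⁆ = 0 := ha₁abelian u (haa₁ hu) Y hY
      have h2 : ⁅u, θ₀ Y⁆ = 0 := by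
        have h3 := congrArg θ₀ h1
        rw [LieHom.map_lie, (hap u hu).1, map_zero, neg_lie] at h3
        exact neg_eq_zero.mp h3
      rw [lie_sub, h1, h2, sub_zero]
  -- X + θ₁ X ∈ a₀, Y + θ₀ Y ∈ a₁
  have hX'a₀ : X + θ₁ X ∈ a₀ := by
    have e : X + θ₁ X = (2 : ℝ) • X - (X - θ₁ X) := by rw [two_smul]; abel
    rw [e]
    exact Submodule.sub_mem _ (Submodule.smul_mem _ _ hX) (haa₀ hXm)
  have hY'a₁ : Y + θ₀ Y ∈ a₁ := by
    have e : Y + θ₀ Y = (2 : ℝ) • Y - (Y - θ₀ Y) := by rw [two_smul]; abel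
    rw [e]
    exact Submodule.sub_mem _ (Submodule.smul_mem _ _ hY) (haa₁ hYm)
  have hθ₀X' : θ₀ (X + θ₁ X) = -(X + θ₁ X) := by
    rw [map_add, hθ₀X, hθ₀θ₁X]; abel
  have hθ₁Y' : θ₁ (Y + θ₀ Y) = -(Y + θ₀ Y) := by
    rw [map_add, hθ₁Y, hθ₁θ₀Y]; abel
  have hθ₁X' : θ₁ (X + θ₁ X) = X + θ₁ X := by
    rw [map_add, hθ₁]; abel
  have hθ₀Y' : θ₀ (Y + θ₀ Y) = Y + θ₀ Y := by
    rw [map_add, hθ₀]; abel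
  -- Z := ⁅X + θ₁ X, Y + θ₀ Y⁆ lies in a
  have hZa : ⁅X + θ₁ X, Y + θ₀ Y⁆ ∈ a := by
    apply hamax
    · rw [LieHom.map_lie, hθ₀X', hθ₀Y', neg_lie]
    · rw [LieHom.map_lie, hθ₁X', hθ₁Y', lie_neg]
    · intro u hu
      have h1 : ⁅u, X + θ₁ X⁆ = 0 := ha₀abelian u (haa₀ hu) _ hX'a₀
      have h2 : ⁅u, Y + θ₀ Y⁆ = 0 := ha₁abelian u (haa₁ hu) _ hY'a₁
      rw [leibniz_lie, h1, h2, zero_lie, lie_zero, add_zero]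
  have hX'Z : ⁅X + θ₁ X, ⁅X + θ₁ X, Y + θ₀ Y⁆⁆ = 0 :=
    ha₀abelian _ hX'a₀ _ (haa₀ hZa)
  have hZ0 : ⁅X + θ₁ X, Y + θ₀ Y⁆ = 0 := by
    by_contra h
    have hpos := hposdef _ h
    have hz : B ⁅X + θ₁ X, Y + θ₀ Y⁆ ⁅X + θ₁ X, Y + θ₀ Y⁆ = 0 := by
      rw [hinv, hX'Z, map_zero, neg_zero]
    rw [hz] at hpos
    exact lt_irrefl 0 hpos
  -- the three other pieces vanish
  have t1 : ⁅X - θ₁ X, Y - θ₀ Y⁆ = 0 := habelian _ hXm _ hYm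
  have t2 : ⁅X - θ₁ X, Y + θ₀ Y⁆ = 0 := ha₁abelian _ (haa₁ hXm) _ hY'a₁
  have t3 : ⁅X + θ₁ X, Y - θ₀ Y⁆ = 0 := ha₀abelian _ hX'a₀ _ (haa₀ hYm)
  -- bilinear expansion
  have expand : ⁅X - θ₁ X, Y - θ₀ Y⁆ + ⁅X - θ₁ X, Y + θ₀ Y⁆
      + ⁅X + θ₁ X, Y - θ₀ Y⁆ + ⁅X + θ₁ X, Y + θ₀ Y⁆ = (4 : ℝ) • ⁅X, Y⁆ := by
    simp only [lie_add, add_lie, lie_sub, sub_lie]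
    module
  rw [t1, t2, t3, hZ0] at expand
  have h4 : (4 : ℝ) • ⁅X, Y⁆ = 0 := by rw [← expand]; abel
  have := smul_eq_zero.mp h4
  rcases this with h | h
  · norm_num at h
  · exact h
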